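/- Let α ≥ 1, let n ∈ ℤ² with n ≠ 0, and let t > 0 satisfy t ⟨n⟩² ≥ 1. Then the partial sums S_N := ∑ ⟨n₁⟩^{−2(1−α)} ⟨n₂⟩^{−2(1−α)} e^{−2t⟨n⟩²} ∫₀^t e^{t₁(⟨n⟩² − ⟨n₁⟩² − ⟨n₂⟩²)} ∫₀^{t₁} e^{t₂(⟨n⟩² + ⟨n₁⟩² + ⟨n₂⟩²)} dt₂ dt₁, where the sum ranges over all n₁ ∈ ℤ² with |n₁| ≤ N, |n − n₁| ≤ N, n₁ ≠ n − n₁, n₁ ≠ −(n − n₁) and n₂ := n − n₁, are nonnegative, nondecreasing in N, and tend to +∞ as N → ∞. (This is the deterministic divergence underlying the negative part of Proposition 1.4(ii): the second-order stochastic object for the heat equation fails to be a spatial distribution for α ≥ 1.) -/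

import Mathlib

/-- Japanese bracket `⟨n⟩ = (1 + |n|²)^{1/2}` for `n ∈ ℤ²`. -/
noncomputable def jb2 (n : ℤ × ℤ) : ℝ :=
  Real.sqrt (1 + (n.1 : ℝ) ^ 2 + (n.2 : ℝ) ^ 2)

/-- Euclidean norm `|n|` for `n ∈ ℤ²`. -/
noncomputable def znorm2 (n : ℤ × ℤ) : ℝ :=
  Real.sqrt ((n.1 : ℝ) ^ 2 + (n.2 : ℝ) ^ 2)

/-- The summand in the heat second-order variance. -/
noncomputable def heatTerm (α : ℝ) (n n₁ : ℤ × ℤ) (t : ℝ) : ℝ :=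
  jb2 n₁ ^ (-(2 * (1 - α))) * jb2 (n - n₁) ^ (-(2 * (1 - α)))
    * Real.exp (-2 * t * jb2 n ^ 2)
    * ∫ t₁ in (0 : ℝ)..t,
        Real.exp (t₁ * (jb2 n ^ 2 - jb2 n₁ ^ 2 - jb2 (n - n₁) ^ 2)) *
          ∫ t₂ in (0 : ℝ)..t₁,
            Real.exp (t₂ * (jb2 n ^ 2 + jb2 n₁ ^ 2 + jb2 (n - n₁) ^ 2))

/-- Truncated sums `S_N` of the heat second-order variance. -/
noncomputable def SHeat2 (α : ℝ) (n : ℤ × ℤ) (t : ℝ) (N : ℕ) : ℝ :=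
  ∑' n₁ : ℤ × ℤ,
    Set.indicator
      {m : ℤ × ℤ | znorm2 m ≤ N ∧ znorm2 (n - m) ≤ N ∧ m ≠ n - m ∧ m ≠ -(n - m)}
      (fun m => heatTerm α n m t) n₁

set_option maxHeartbeats 1000000

namespace Stmt7Aux

lemma jb2_sq (m : ℤ × ℤ) : jb2 m ^ 2 = 1 + (m.1:ℝ)^2 + (m.2:ℝ)^2 :=
  Real.sq_sqrt (by positivity)

lemma one_le_jb2 (m : ℤ × ℤ) : 1 ≤ jb2 m := by
  rw [jb2, Real.one_le_sqrt]
  nlinarith [sq_nonneg ((m.1:ℝ)), sq_nonneg ((m.2:ℝ))]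

lemma jb2_sq_pos (m : ℤ × ℤ) : 0 < jb2 m ^ 2 := by
  have := one_le_jb2 m; nlinarith

lemma znorm2_le (m : ℤ × ℤ) : znorm2 m ≤ |(m.1:ℝ)| + |(m.2:ℝ)| := by
  rw [znorm2, show (m.1:ℝ)^2 + (m.2:ℝ)^2 = |(m.1:ℝ)|^2 + |(m.2:ℝ)|^2 by simp [sq_abs]]
  calc Real.sqrt (|(m.1:ℝ)|^2 + |(m.2:ℝ)|^2) ≤ Real.sqrt ((|(m.1:ℝ)| + |(m.2:ℝ)|)^2) := by
        apply Real.sqrt_le_sqrt; nlinarith [abs_nonneg ((m.1:ℝ)), abs_nonneg ((m.2:ℝ))]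
    _ = |(m.1:ℝ)| + |(m.2:ℝ)| := Real.sqrt_sq (by positivity)

def hset (n : ℤ × ℤ) (N : ℕ) : Set (ℤ × ℤ) :=
  {m : ℤ × ℤ | znorm2 m ≤ N ∧ znorm2 (n - m) ≤ N ∧ m ≠ n - m ∧ m ≠ -(n - m)}

lemma hset_finite (n : ℤ × ℤ) (N : ℕ) : (hset n N).Finite := by
  apply Set.Finite.subset (Set.finite_Icc ((-(N:ℤ)), (-(N:ℤ))) ((N:ℤ), (N:ℤ)))
  intro m hm
  obtain ⟨h1, -, -, -⟩ := hm
  rw [znorm2] at h1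
  have hsq : (m.1:ℝ)^2 + (m.2:ℝ)^2 ≤ (N:ℝ)^2 := by
    have h0 := Real.sqrt_nonneg ((m.1:ℝ)^2 + (m.2:ℝ)^2)
    have := Real.sq_sqrt (by positivity : (0:ℝ) ≤ (m.1:ℝ)^2 + (m.2:ℝ)^2)
    nlinarith
  have h2' : |(m.1:ℝ)| ≤ (N:ℝ) := by
    rw [← Real.sqrt_sq_eq_abs, ← Real.sqrt_sq (by positivity : (0:ℝ) ≤ (N:ℝ))]
    apply Real.sqrt_le_sqrt; nlinarith [sq_nonneg ((m.2:ℝ))]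
  have h3' : |(m.2:ℝ)| ≤ (N:ℝ) := by
    rw [← Real.sqrt_sq_eq_abs, ← Real.sqrt_sq (by positivity : (0:ℝ) ≤ (N:ℝ))]
    apply Real.sqrt_le_sqrt; nlinarith [sq_nonneg ((m.1:ℝ))]
  have i2 : |m.1| ≤ (N:ℤ) := by exact_mod_cast (by push_cast; exact h2' : |((m.1:ℤ):ℝ)| ≤ ((N:ℤ):ℝ))
  have i3 : |m.2| ≤ (N:ℤ) := by exact_mod_cast (by push_cast; exact h3' : |((m.2:ℤ):ℝ)| ≤ ((N:ℤ):ℝ))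
  rw [Set.mem_Icc]
  constructor <;> constructor <;> simp_all [abs_le, Prod.le_def]

lemma heatTerm_nonneg {α t : ℝ} (hα : 1 ≤ α) (ht : 0 ≤ t) (n m : ℤ × ℤ) :
    0 ≤ heatTerm α n m t := by
  rw [heatTerm]
  have h1 : (0:ℝ) ≤ jb2 m ^ (-(2 * (1 - α))) :=
    Real.rpow_nonneg (by linarith [one_le_jb2 m]) _
  have h2 : (0:ℝ) ≤ jb2 (n - m) ^ (-(2 * (1 - α))) :=
    Real.rpow_nonneg (by linarith [one_le_jb2 (n - m)]) _
  have h3 : (0:ℝ) ≤ ∫ t₁ in (0:ℝ)..t,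
      Real.exp (t₁ * (jb2 n ^ 2 - jb2 m ^ 2 - jb2 (n - m) ^ 2)) *
        ∫ t₂ in (0:ℝ)..t₁, Real.exp (t₂ * (jb2 n ^ 2 + jb2 m ^ 2 + jb2 (n - m) ^ 2)) := by
    apply intervalIntegral.integral_nonneg ht
    intro x hx
    apply mul_nonneg (Real.exp_pos _).le
    apply intervalIntegral.integral_nonneg hx.1
    intro y _
    exact (Real.exp_pos _).le
  positivity

lemma SHeat2_eq (α : ℝ) (n : ℤ × ℤ) (t : ℝ) (N : ℕ) :
    SHeat2 α n t N = ∑ m ∈ (hset_finite n N).toFinset, heatTerm α n m t := by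
  rw [SHeat2]
  show (∑' n₁ : ℤ × ℤ, (hset n N).indicator (fun m => heatTerm α n m t) n₁) = _
  rw [tsum_eq_sum (s := (hset_finite n N).toFinset)
    (fun b hb => Set.indicator_of_notMem
      (fun h => hb ((hset_finite n N).mem_toFinset.2 h)) _)]
  apply Finset.sum_congr rfl
  intro m hm
  exact Set.indicator_of_mem ((hset_finite n N).mem_toFinset.1 hm) _

lemma core_int (a b c t : ℝ) (ht : 0 < t) (hta : 1 ≤ t*a) (ha : 0 < a) (has : a ≤ b + c) :
    t/(4*(b+c)) ≤ ∫ t₁ in (0:ℝ)..t, Real.exp (t₁*(a-b-c)) * ∫ t₂ in (0:ℝ)..t₁,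
      Real.exp (t₂*(a+b+c)) := by
  simp only [sub_sub, add_assoc]
  set s := b + c with hsdef
  clear_value s
  have hs : 0 < s := lt_of_lt_of_le ha has
  have hassum : 0 < a + s := by linarith
  have hinner : ∀ x : ℝ, ∫ t₂ in (0:ℝ)..x, Real.exp (t₂*(a+s)) = (Real.exp (x*(a+s)) - 1)/(a+s) := by
    intro x
    rw [intervalIntegral.integral_comp_mul_right (fun y => Real.exp y) hassum.ne']
    simp [integral_exp, div_eq_inv_mul]
  have hcongr : ∀ x : ℝ, Real.exp (x*(a-s)) * ∫ t₂ in (0:ℝ)..x, Real.exp (t₂*(a+s))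
      = (Real.exp (x*(2*a)) - Real.exp (x*(a-s)))/(a+s) := by
    intro x
    rw [hinner x, ← mul_div_assoc]
    congr 1
    rw [mul_sub, mul_one, ← Real.exp_add]
    ring_nf
  rw [intervalIntegral.integral_congr (g := fun x => (Real.exp (x*(2*a)) - Real.exp (x*(a-s)))/(a+s))
    (fun x _ => hcongr x)]
  have hcont : Continuous (fun x => (Real.exp (x*(2*a)) - Real.exp (x*(a-s)))/(a+s)) := by
    fun_prop
  have hsplit : (∫ x in (0:ℝ)..(t/2), (Real.exp (x*(2*a)) - Real.exp (x*(a-s)))/(a+s))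
      + (∫ x in (t/2)..t, (Real.exp (x*(2*a)) - Real.exp (x*(a-s)))/(a+s))
      = ∫ x in (0:ℝ)..t, (Real.exp (x*(2*a)) - Real.exp (x*(a-s)))/(a+s) :=
    intervalIntegral.integral_add_adjacent_intervals (hcont.intervalIntegrable _ _)
      (hcont.intervalIntegrable _ _)
  rw [← hsplit]
  have h1 : 0 ≤ ∫ x in (0:ℝ)..(t/2), (Real.exp (x*(2*a)) - Real.exp (x*(a-s)))/(a+s) := by
    apply intervalIntegral.integral_nonneg (by linarith)
    intro x hx
    have : Real.exp (x*(a-s)) ≤ Real.exp (x*(2*a)) := by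
      apply Real.exp_le_exp.2; nlinarith [hx.1]
    apply div_nonneg (by linarith) hassum.le
  have h2 : t/(4*s) ≤ ∫ x in (t/2)..t, (Real.exp (x*(2*a)) - Real.exp (x*(a-s)))/(a+s) := by
    have hb : ∀ x ∈ Set.Icc (t/2) t, 1/(2*s) ≤ (Real.exp (x*(2*a)) - Real.exp (x*(a-s)))/(a+s) := by
      intro x hx
      have hx0 : 0 ≤ x := by linarith [hx.1]
      have he1 : Real.exp (x*(a-s)) ≤ 1 := by
        apply Real.exp_le_one_iff.2; nlinarith
      have he2 : Real.exp 1 ≤ Real.exp (x*(2*a)) := by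
        apply Real.exp_le_exp.2; nlinarith [hx.1]
      have hE : (2:ℝ) ≤ Real.exp 1 := by
        have := Real.add_one_le_exp 1; linarith
      rw [div_le_div_iff₀ (by positivity) hassum]
      nlinarith
    calc t/(4*s) = (t - t/2) * (1/(2*s)) := by field_simp; ring
      _ = ∫ _x in (t/2)..t, (1/(2*s)) := by rw [intervalIntegral.integral_const]; simp [smul_eq_mul]
      _ ≤ _ := by
          apply intervalIntegral.integral_mono_on (by linarith)
            (intervalIntegrable_const) (hcont.intervalIntegrable _ _) hb
  linarith

lemma pt_lb (α t : ℝ) (hα : 1 ≤ α) (ht : 0 < t) (n : ℤ × ℤ) (htn : 1 ≤ t * jb2 n ^ 2)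
    (k j : ℕ) (hk : 2 + n.1.natAbs + n.2.natAbs ≤ k) (hj : j < k) :
    (Real.exp (-2*t*jb2 n ^ 2) * (t/4)) / ((8 + 2*(n.1:ℝ)^2 + 2*(n.2:ℝ)^2)*(k:ℝ)^2)
      ≤ heatTerm α n ((k:ℤ),(j:ℤ)) t := by
  have ha : 0 < jb2 n ^ 2 := jb2_sq_pos n
  have hA : jb2 n ^ 2 = 1 + (n.1:ℝ)^2 + (n.2:ℝ)^2 := jb2_sq n
  have hkR : (2:ℝ) + |(n.1:ℝ)| + |(n.2:ℝ)| ≤ (k:ℝ) := by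
    have h := (Nat.cast_le (α := ℝ)).2 hk
    push_cast [Nat.cast_natAbs] at h
    convert h using 2 <;> rw [Int.cast_abs]
  have habs1 : (0:ℝ) ≤ |(n.1:ℝ)| := abs_nonneg _
  have habs2 : (0:ℝ) ≤ |(n.2:ℝ)| := abs_nonneg _
  have hk2 : (2:ℝ) ≤ (k:ℝ) := by linarith
  have hjk : (j:ℝ) ≤ (k:ℝ) := by exact_mod_cast hj.le
  have hj0 : (0:ℝ) ≤ (j:ℝ) := Nat.cast_nonneg j
  have hbsq : jb2 ((k:ℤ),(j:ℤ)) ^ 2 = 1 + (k:ℝ)^2 + (j:ℝ)^2 := by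
    rw [jb2_sq]; push_cast; ring
  have hcsq : jb2 (n - ((k:ℤ),(j:ℤ))) ^ 2 = 1 + ((n.1:ℝ) - (k:ℝ))^2 + ((n.2:ℝ) - (j:ℝ))^2 := by
    rw [jb2_sq, show (n - ((k:ℤ),(j:ℤ))).1 = n.1 - (k:ℤ) from rfl,
      show (n - ((k:ℤ),(j:ℤ))).2 = n.2 - (j:ℤ) from rfl]
    push_cast; ring
  have hs_ub : jb2 ((k:ℤ),(j:ℤ)) ^ 2 + jb2 (n - ((k:ℤ),(j:ℤ))) ^ 2
      ≤ (8 + 2*(n.1:ℝ)^2 + 2*(n.2:ℝ)^2)*(k:ℝ)^2 := by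
    rw [hbsq, hcsq]
    have h1 : (1:ℝ) ≤ (k:ℝ)^2 := by nlinarith
    have h2 : (j:ℝ)^2 ≤ (k:ℝ)^2 := by nlinarith
    have h3 : ((n.1:ℝ) - (k:ℝ))^2 ≤ 2*(n.1:ℝ)^2 + 2*(k:ℝ)^2 := by
      nlinarith [sq_nonneg ((n.1:ℝ) + (k:ℝ))]
    have h4 : ((n.2:ℝ) - (j:ℝ))^2 ≤ 2*(n.2:ℝ)^2 + 2*(j:ℝ)^2 := by
      nlinarith [sq_nonneg ((n.2:ℝ) + (j:ℝ))]
    have h5 : 2*(n.1:ℝ)^2 ≤ 2*(n.1:ℝ)^2*(k:ℝ)^2 := by nlinarith [sq_nonneg (n.1:ℝ)]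
    have h6 : 2*(n.2:ℝ)^2 ≤ 2*(n.2:ℝ)^2*(k:ℝ)^2 := by nlinarith [sq_nonneg (n.2:ℝ)]
    nlinarith [h1, h2, h3, h4, h5, h6]
  have h_as : jb2 n ^ 2 ≤ jb2 ((k:ℤ),(j:ℤ)) ^ 2 + jb2 (n - ((k:ℤ),(j:ℤ))) ^ 2 := by
    rw [hbsq, hcsq, hA]
    have hq : ((2:ℝ) + |(n.1:ℝ)| + |(n.2:ℝ)|)^2 ≤ (k:ℝ)^2 := by nlinarith [habs1, habs2]
    nlinarith [hq, sq_abs (n.1:ℝ), sq_abs (n.2:ℝ), mul_nonneg habs1 habs2,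
      sq_nonneg ((n.1:ℝ) - (k:ℝ)), sq_nonneg ((n.2:ℝ) - (j:ℝ)), sq_nonneg ((j:ℝ))]
  have hs_pos : 0 < jb2 ((k:ℤ),(j:ℤ)) ^ 2 + jb2 (n - ((k:ℤ),(j:ℤ))) ^ 2 :=
    lt_of_lt_of_le ha h_as
  have hcore := core_int (jb2 n ^ 2) (jb2 ((k:ℤ),(j:ℤ)) ^ 2) (jb2 (n - ((k:ℤ),(j:ℤ))) ^ 2)
    t ht htn ha h_as
  rw [heatTerm]
  have hc1 : 1 ≤ jb2 ((k:ℤ),(j:ℤ)) ^ (-(2 * (1 - α))) :=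
    Real.one_le_rpow (one_le_jb2 _) (by linarith)
  have hc2 : 1 ≤ jb2 (n - ((k:ℤ),(j:ℤ))) ^ (-(2 * (1 - α))) :=
    Real.one_le_rpow (one_le_jb2 _) (by linarith)
  have hE : 0 < Real.exp (-2*t*jb2 n ^ 2) := Real.exp_pos _
  have hIge : t/(4*(jb2 ((k:ℤ),(j:ℤ)) ^ 2 + jb2 (n - ((k:ℤ),(j:ℤ))) ^ 2))
      ≤ ∫ t₁ in (0:ℝ)..t,
        Real.exp (t₁ * (jb2 n ^ 2 - jb2 ((k:ℤ),(j:ℤ)) ^ 2 - jb2 (n - ((k:ℤ),(j:ℤ))) ^ 2)) *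
          ∫ t₂ in (0:ℝ)..t₁,
            Real.exp (t₂ * (jb2 n ^ 2 + jb2 ((k:ℤ),(j:ℤ)) ^ 2 + jb2 (n - ((k:ℤ),(j:ℤ))) ^ 2)) := by
    convert hcore using 4 <;> ring_nf
  set I : ℝ := ∫ t₁ in (0:ℝ)..t,
        Real.exp (t₁ * (jb2 n ^ 2 - jb2 ((k:ℤ),(j:ℤ)) ^ 2 - jb2 (n - ((k:ℤ),(j:ℤ))) ^ 2)) *
          ∫ t₂ in (0:ℝ)..t₁,
            Real.exp (t₂ * (jb2 n ^ 2 + jb2 ((k:ℤ),(j:ℤ)) ^ 2 + jb2 (n - ((k:ℤ),(j:ℤ))) ^ 2))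
  have hIpos : 0 < I := lt_of_lt_of_le (by positivity) hIge
  have step1 : (Real.exp (-2*t*jb2 n ^ 2) * (t/4)) / ((8 + 2*(n.1:ℝ)^2 + 2*(n.2:ℝ)^2)*(k:ℝ)^2)
      ≤ (Real.exp (-2*t*jb2 n ^ 2) * (t/4)) / (jb2 ((k:ℤ),(j:ℤ)) ^ 2 + jb2 (n - ((k:ℤ),(j:ℤ))) ^ 2) :=
    div_le_div_of_nonneg_left (by positivity) hs_pos hs_ub
  have step2 : (Real.exp (-2*t*jb2 n ^ 2) * (t/4)) / (jb2 ((k:ℤ),(j:ℤ)) ^ 2 + jb2 (n - ((k:ℤ),(j:ℤ))) ^ 2)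
      = Real.exp (-2*t*jb2 n ^ 2) * (t/(4*(jb2 ((k:ℤ),(j:ℤ)) ^ 2 + jb2 (n - ((k:ℤ),(j:ℤ))) ^ 2))) := by
    rw [mul_div_assoc, div_div]
  have step3 : Real.exp (-2*t*jb2 n ^ 2) * (t/(4*(jb2 ((k:ℤ),(j:ℤ)) ^ 2 + jb2 (n - ((k:ℤ),(j:ℤ))) ^ 2)))
      ≤ Real.exp (-2*t*jb2 n ^ 2) * I := mul_le_mul_of_nonneg_left hIge hE.le
  have step4 : Real.exp (-2*t*jb2 n ^ 2) * I
      ≤ jb2 ((k:ℤ),(j:ℤ)) ^ (-(2 * (1 - α))) * jb2 (n - ((k:ℤ),(j:ℤ))) ^ (-(2 * (1 - α)))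
        * Real.exp (-2 * t * jb2 n ^ 2) * I := by
    have hEI : 0 < Real.exp (-2*t*jb2 n ^ 2) * I := mul_pos hE hIpos
    have w1 : Real.exp (-2*t*jb2 n ^ 2) * I
        ≤ jb2 (n - ((k:ℤ),(j:ℤ))) ^ (-(2 * (1 - α))) * (Real.exp (-2*t*jb2 n ^ 2) * I) :=
      le_mul_of_one_le_left hEI.le hc2
    have w2 : jb2 (n - ((k:ℤ),(j:ℤ))) ^ (-(2 * (1 - α))) * (Real.exp (-2*t*jb2 n ^ 2) * I)
        ≤ jb2 ((k:ℤ),(j:ℤ)) ^ (-(2 * (1 - α))) *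
          (jb2 (n - ((k:ℤ),(j:ℤ))) ^ (-(2 * (1 - α))) * (Real.exp (-2*t*jb2 n ^ 2) * I)) :=
      le_mul_of_one_le_left (mul_nonneg (by linarith) hEI.le) hc1
    have e : jb2 ((k:ℤ),(j:ℤ)) ^ (-(2 * (1 - α))) * jb2 (n - ((k:ℤ),(j:ℤ))) ^ (-(2 * (1 - α)))
        * Real.exp (-2 * t * jb2 n ^ 2) * I
        = jb2 ((k:ℤ),(j:ℤ)) ^ (-(2 * (1 - α))) *
          (jb2 (n - ((k:ℤ),(j:ℤ))) ^ (-(2 * (1 - α))) * (Real.exp (-2*t*jb2 n ^ 2) * I)) := by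
      ring_nf
    rw [e]
    linarith
  calc (Real.exp (-2*t*jb2 n ^ 2) * (t/4)) / ((8 + 2*(n.1:ℝ)^2 + 2*(n.2:ℝ)^2)*(k:ℝ)^2)
      ≤ Real.exp (-2*t*jb2 n ^ 2) * (t/(4*(jb2 ((k:ℤ),(j:ℤ)) ^ 2 + jb2 (n - ((k:ℤ),(j:ℤ))) ^ 2))) := by
        rw [← step2]; exact step1
    _ ≤ Real.exp (-2*t*jb2 n ^ 2) * I := step3
    _ ≤ _ := step4

end Stmt7Aux

open Stmt7Aux Filter

/-- Divergence underlying the negative part of Proposition 1.4(ii): the second-order heat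
object fails to be a spatial distribution for `α ≥ 1`. -/
theorem stmt7 (α : ℝ) (hα : 1 ≤ α) (n : ℤ × ℤ) (hn : n ≠ 0) (t : ℝ) (ht : 0 < t)
    (htn : 1 ≤ t * jb2 n ^ 2) :
    (∀ N : ℕ, 0 ≤ SHeat2 α n t N) ∧
    Monotone (fun N : ℕ => SHeat2 α n t N) ∧
    Filter.Tendsto (fun N : ℕ => SHeat2 α n t N) Filter.atTop Filter.atTop := by
  have hterm : ∀ m : ℤ × ℤ, 0 ≤ heatTerm α n m t := heatTerm_nonneg hα ht.le n
  have hnonneg : ∀ N : ℕ, 0 ≤ SHeat2 α n t N := by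
    intro N
    rw [SHeat2_eq]
    exact Finset.sum_nonneg fun m _ => hterm m
  have hsummable : ∀ N : ℕ,
      Summable (fun n₁ => (hset n N).indicator (fun m => heatTerm α n m t) n₁) := by
    intro N
    exact summable_of_ne_finset_zero (s := (hset_finite n N).toFinset)
      (fun b hb => Set.indicator_of_notMem
        (fun h => hb ((hset_finite n N).mem_toFinset.2 h)) _)
  have hmono : Monotone (fun N : ℕ => SHeat2 α n t N) := by
    intro N M hNM
    show SHeat2 α n t N ≤ SHeat2 α n t M
    have hsub : hset n N ⊆ hset n M := by
      intro m hm
      obtain ⟨h1, h2, h3, h4⟩ := hm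
      have hNM' : (N:ℝ) ≤ M := by exact_mod_cast hNM
      exact ⟨h1.trans hNM', h2.trans hNM', h3, h4⟩
    show (∑' n₁ : ℤ × ℤ, (hset n N).indicator (fun m => heatTerm α n m t) n₁)
      ≤ ∑' n₁ : ℤ × ℤ, (hset n M).indicator (fun m => heatTerm α n m t) n₁
    exact Summable.tsum_le_tsum
      (fun m => Set.indicator_le_indicator_of_subset hsub (fun x => hterm x) m)
      (hsummable N) (hsummable M)
  refine ⟨hnonneg, hmono, ?_⟩
  -- divergence
  set a : ℝ := jb2 n ^ 2 with ha_def
  have hA : a = 1 + (n.1:ℝ)^2 + (n.2:ℝ)^2 := jb2_sq n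
  have ha : 0 < a := jb2_sq_pos n
  set k₀ : ℕ := 2 + n.1.natAbs + n.2.natAbs with hk₀_def
  set C : ℝ := 8 + 2*(n.1:ℝ)^2 + 2*(n.2:ℝ)^2 with hC_def
  have hC : 0 < C := by positivity
  set c₀ : ℝ := Real.exp (-2*t*a) * (t/4) with hc₀_def
  have hc₀ : 0 < c₀ := by positivity
  -- pointwise lower bound
  have hpt : ∀ k j : ℕ, k₀ ≤ k → j < k →
      c₀/(C*(k:ℝ)^2) ≤ heatTerm α n ((k:ℤ),(j:ℤ)) t := by
    intro k j hk hj
    rw [hc₀_def, hC_def, ha_def]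
    rw [hk₀_def] at hk
    exact pt_lb α t hα ht n htn k j hk hj
  -- finsets
  set G : ℕ → Finset (ℤ × ℤ) := fun K =>
    (Finset.Ico k₀ K).biUnion (fun k => (Finset.range k).image (fun j : ℕ => ((k:ℤ), (j:ℤ)))) with hG_def
  set NN : ℕ → ℕ := fun K => 2*K + n.1.natAbs + n.2.natAbs with hNN_def
  have hGsub : ∀ K : ℕ, ∀ m ∈ G K, m ∈ (hset_finite n (NN K)).toFinset := by
    intro K m hm
    rw [hG_def] at hm
    simp only [Finset.mem_biUnion, Finset.mem_image, Finset.mem_Ico, Finset.mem_range] at hm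
    obtain ⟨k, ⟨hk₀k, hkK⟩, j, hjk, rfl⟩ := hm
    rw [Set.Finite.mem_toFinset]
    have hza : znorm2 ((k:ℤ),(j:ℤ)) ≤ (NN K : ℝ) := by
      refine (znorm2_le _).trans ?_
      simp only [hNN_def]
      push_cast
      rw [abs_of_nonneg (by positivity : (0:ℝ) ≤ ((k:ℕ):ℝ)),
        abs_of_nonneg (by positivity : (0:ℝ) ≤ ((j:ℕ):ℝ))]
      have h1 : (k:ℝ) ≤ (K:ℝ) := by exact_mod_cast hkK.le
      have h2 : (j:ℝ) ≤ (K:ℝ) := by exact_mod_cast (hjk.trans hkK).le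
      have : (0:ℝ) ≤ (n.1.natAbs:ℝ) + (n.2.natAbs:ℝ) := by positivity
      push_cast at this ⊢
      linarith
    have hzb : znorm2 (n - ((k:ℤ),(j:ℤ))) ≤ (NN K : ℝ) := by
      refine (znorm2_le _).trans ?_
      rw [show (n - ((k:ℤ),(j:ℤ))).1 = n.1 - (k:ℤ) from rfl,
        show (n - ((k:ℤ),(j:ℤ))).2 = n.2 - (j:ℤ) from rfl]
      have h1 : (k:ℝ) ≤ (K:ℝ) := by exact_mod_cast hkK.le
      have h2 : (j:ℝ) ≤ (K:ℝ) := by exact_mod_cast (hjk.trans hkK).le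
      have t1 : |(n.1:ℝ) - (k:ℝ)| ≤ |(n.1:ℝ)| + (k:ℝ) := by
        refine (abs_sub _ _).trans ?_
        rw [abs_of_nonneg (by positivity : (0:ℝ) ≤ ((k:ℕ):ℝ))]
      have t2 : |(n.2:ℝ) - (j:ℝ)| ≤ |(n.2:ℝ)| + (j:ℝ) := by
        refine (abs_sub _ _).trans ?_
        rw [abs_of_nonneg (by positivity : (0:ℝ) ≤ ((j:ℕ):ℝ))]
      have e3 : |(n.1:ℝ)| = ((n.1.natAbs : ℕ) : ℝ) := by simp [Nat.cast_natAbs]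
      have e4 : |(n.2:ℝ)| = ((n.2.natAbs : ℕ) : ℝ) := by simp [Nat.cast_natAbs]
      simp only [hNN_def]
      push_cast
      linarith [t1, t2, e3, e4, h1, h2]
    have hk' : 2 + n.1.natAbs + n.2.natAbs ≤ k := hk₀_def ▸ hk₀k
    have hne1 : ((k:ℤ),(j:ℤ)) ≠ n - ((k:ℤ),(j:ℤ)) := by
      intro h
      have h1 : (k:ℤ) = n.1 - (k:ℤ) := congrArg Prod.fst h
      omega
    have hne2 : ((k:ℤ),(j:ℤ)) ≠ -(n - ((k:ℤ),(j:ℤ))) := by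
      intro h
      have h1 : (k:ℤ) = -(n.1 - (k:ℤ)) := congrArg Prod.fst h
      have h2 : (j:ℤ) = -(n.2 - (j:ℤ)) := congrArg Prod.snd h
      have e1 : n.1 = 0 := by omega
      have e2 : n.2 = 0 := by omega
      apply hn
      rw [Prod.ext_iff]
      exact ⟨by simpa using e1, by simpa using e2⟩
    exact ⟨hza, hzb, hne1, hne2⟩
  have hrow : ∀ K : ℕ, ∀ k ∈ Finset.Ico k₀ K,
      (c₀/C) * (1/(k:ℝ)) ≤
        ∑ m ∈ (Finset.range k).image (fun j : ℕ => ((k:ℤ), (j:ℤ))), heatTerm α n m t := by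
    intro K k hk
    rw [Finset.mem_Ico] at hk
    have hkpos : 0 < k := lt_of_lt_of_le (by omega) hk.1
    rw [Finset.sum_image (fun j _ j' _ h => by simpa using (Prod.ext_iff.1 h).2)]
    have hconst : ∀ j ∈ Finset.range k, c₀/(C*(k:ℝ)^2) ≤ heatTerm α n ((k:ℤ),(j:ℤ)) t :=
      fun j hj => hpt k j hk.1 (Finset.mem_range.1 hj)
    calc (c₀/C) * (1/(k:ℝ)) = (k:ℝ) * (c₀/(C*(k:ℝ)^2)) := by
          have : ((k:ℝ)) ≠ 0 := by positivity
          field_simp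
      _ = ∑ _j ∈ Finset.range k, c₀/(C*(k:ℝ)^2) := by
          rw [Finset.sum_const, Finset.card_range, nsmul_eq_mul]
      _ ≤ _ := Finset.sum_le_sum hconst
  have hdisj : ∀ K : ℕ, ((Finset.Ico k₀ K : Finset ℕ) : Set ℕ).PairwiseDisjoint
      (fun k => (Finset.range k).image (fun j : ℕ => ((k:ℤ), (j:ℤ)))) := by
    intro K x _ y _ hxy
    simp only [Function.onFun]
    rw [Finset.disjoint_left]
    intro m hmx hmy
    simp only [Finset.mem_image, Finset.mem_range] at hmx hmy
    obtain ⟨j, _, rfl⟩ := hmx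
    obtain ⟨j', _, h⟩ := hmy
    injection h with h1 h2
    exact hxy (by exact_mod_cast h1.symm)
  have hGge : ∀ K : ℕ, (c₀/C) * (∑ k ∈ Finset.Ico k₀ K, (1/(k:ℝ)))
      ≤ ∑ m ∈ G K, heatTerm α n m t := by
    intro K
    rw [hG_def, Finset.sum_biUnion (hdisj K), Finset.mul_sum]
    exact Finset.sum_le_sum (hrow K)
  have hSge : ∀ K : ℕ, (∑ m ∈ G K, heatTerm α n m t) ≤ SHeat2 α n t (NN K) := by
    intro K
    rw [SHeat2_eq]
    exact Finset.sum_le_sum_of_subset_of_nonneg (fun m hm => hGsub K m hm)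
      (fun m _ _ => hterm m)
  -- harmonic divergence
  have hH1 : Tendsto (fun K : ℕ => ∑ k ∈ Finset.range K, (1/(k:ℝ))) atTop atTop := by
    rw [← Filter.tendsto_add_atTop_iff_nat 1]
    apply Real.tendsto_sum_range_one_div_nat_succ_atTop.congr
    intro K
    rw [Finset.sum_range_succ']
    push_cast
    simp
  have hH2 : Tendsto (fun K : ℕ => ∑ k ∈ Finset.Ico k₀ K, (1/(k:ℝ))) atTop atTop := by
    apply Tendsto.congr'
      (f₁ := fun K : ℕ => (∑ k ∈ Finset.range K, (1/(k:ℝ))) + -(∑ k ∈ Finset.range k₀, (1/(k:ℝ))))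
    · filter_upwards [Filter.eventually_ge_atTop k₀] with K hK
      rw [Finset.sum_Ico_eq_sub _ hK]
      ring
    · exact tendsto_atTop_add_const_right _ _ hH1
  have hL : Tendsto (fun K : ℕ => (c₀/C) * ∑ k ∈ Finset.Ico k₀ K, (1/(k:ℝ))) atTop atTop :=
    hH2.const_mul_atTop (div_pos hc₀ hC)
  apply tendsto_atTop_atTop_of_monotone hmono
  intro b
  obtain ⟨K, hK⟩ := (hL.eventually_ge_atTop b).exists
  exact ⟨NN K, hK.trans ((hGge K).trans (hSge K))⟩
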